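/- Fix r > c > 0 and for each integer n ≥ 1 let β^N(n) be the unique β ∈ (0,1) with n·β·log(β·r/c) = 1 − β. Then the sequence n ↦ β^N(n) is strictly decreasing. -/
import Mathlib


/-- The neutral-regime equilibrium share `β^N(n)` is a strictly decreasing function of the
number of CPs `n ≥ 1`. -/
theorem stmt_11 (r c : ℝ) (hc : 0 < c) (hrc : c < r) (β : ℕ → ℝ)
    (hmem : ∀ n : ℕ, 1 ≤ n → β n ∈ Set.Ioo (0 : ℝ) 1)
    (heq : ∀ n : ℕ, 1 ≤ n → (n : ℝ) * β n * Real.log (β n * r / c) = 1 - β n) :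
    ∀ m n : ℕ, 1 ≤ m → m < n → β n < β m := by
  intro m n hm hmn
  by_contra h
  push_neg at h
  have hn : 1 ≤ n := le_trans hm hmn.le
  obtain ⟨ha0, ha1⟩ := hmem m hm
  obtain ⟨hb0, hb1⟩ := hmem n hn
  have hA := heq m hm
  have hB := heq n hn
  have hr : 0 < r := hc.trans hrc
  have hmpos : (0:ℝ) < m := by exact_mod_cast hm
  have hmn' : (m:ℝ) < n := by exact_mod_cast hmn
  set L1 := Real.log (β m * r / c) with hL1
  set L2 := Real.log (β n * r / c) with hL2
  have hL1pos : 0 < L1 := by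
    by_contra hL
    push_neg at hL
    nlinarith [mul_pos hmpos ha0]
  have hL12 : L1 ≤ L2 := by
    apply Real.log_le_log (by positivity)
    gcongr
  have hL2pos : 0 < L2 := lt_of_lt_of_le hL1pos hL12
  nlinarith [mul_pos hb0 hL2pos, mul_nonneg (mul_nonneg hmpos.le hb0.le) (sub_nonneg.mpr hL12),
    mul_nonneg (mul_nonneg hmpos.le hL1pos.le) (sub_nonneg.mpr h)]
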